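/- For the linearized first-order (non-uniform Kuramoto) stochastic system on the complete graph with n nodes, D = dI and uniform line weight γ, the asymptotic variance matrix of the phase differences is Q̄_δ = (1/(2dγn)) C̃ᵀ B̃² C̃, which coincides with the phase-difference variance matrix of the second-order swing system on the same graph. -/

import Mathlib

open Matrix

set_option maxHeartbeats 1000000 in
/-- First-order (non-uniform Kuramoto) system on the complete graph: the asymptotic
phase-difference variance matrix is `(1/(2dγn)) C̃ᵀ B̃² C̃`, coinciding with that of the
second-order swing system. -/
theorem stmt_15 (n m : ℕ) (hn : 2 ≤ n) (d γ : ℝ) (hd : 0 < d) (hγ : 0 < γ)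
    (b : Fin n → ℝ)
    (U2 : Matrix (Fin n) (Fin m) ℝ)
    (hU1 : U2ᵀ * U2 = 1)
    (hU2 : U2 * U2ᵀ = 1 - Matrix.of fun _ _ : Fin n => 1 / (n : ℝ))
    (Qx : Matrix (Fin m) (Fin m) ℝ)
    (hQx : -(((n : ℝ) * γ / d) • (1 : Matrix (Fin m) (Fin m) ℝ)) * Qx
        - Qx * (((n : ℝ) * γ / d) • (1 : Matrix (Fin m) (Fin m) ℝ))
        + (1 / d) • (U2ᵀ * (Matrix.diagonal fun i => (b i) ^ 2) * U2) = 0) :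
    let B2 : Matrix (Fin n) (Fin n) ℝ := Matrix.diagonal fun i => (b i) ^ 2
    let C : Matrix (Fin n) {p : Fin n × Fin n // p.1 < p.2} ℝ :=
      Matrix.of fun i e => if i = e.1.1 then 1 else if i = e.1.2 then -1 else 0
    let Qδ := Cᵀ * ((1 / d) • (U2 * Qx * U2ᵀ)) * C
    Qδ = (1 / (2 * d * γ * n)) • (Cᵀ * B2 * C) := by
  intro B2 C Qδ
  have hn0 : (0:ℝ) < (n:ℝ) := by positivity
  set c : ℝ := (n : ℝ) * γ / d with hc_def
  have hc : c ≠ 0 := by positivity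
  -- solve the Lyapunov equation
  simp only [neg_mul, smul_mul_assoc, one_mul, Matrix.mul_smul, mul_one] at hQx
  have h2 : (1 / d) • (U2ᵀ * B2 * U2) = c • Qx + c • Qx := by
    rw [← sub_eq_zero, ← hQx]; abel
  have h3 : (2 * c) • Qx = (1 / d) • (U2ᵀ * B2 * U2) := by
    rw [two_mul, add_smul, h2]
  have hQx' : Qx = (1 / (2 * (n:ℝ) * γ)) • (U2ᵀ * B2 * U2) := by
    have h4 : Qx = (2 * c)⁻¹ • ((1 / d) • (U2ᵀ * B2 * U2)) := by
      rw [← h3, inv_smul_smul₀ (by positivity)]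
    rw [h4, smul_smul]
    congr 1
    rw [hc_def]
    field_simp
  -- C annihilates the all-ones part
  have hCJ : Cᵀ * (Matrix.of fun _ _ : Fin n => 1 / (n : ℝ)) = 0 := by
    ext e j
    simp only [Matrix.mul_apply, Matrix.transpose_apply, Matrix.of_apply, Matrix.zero_apply, C]
    have hne : e.1.1 ≠ e.1.2 := ne_of_lt e.2
    have hsplit : ∀ i : Fin n,
        (if i = e.1.1 then (1:ℝ) else if i = e.1.2 then -1 else 0) * (1 / (n:ℝ))
        = ((if i = e.1.1 then (1:ℝ) else 0) + (if i = e.1.2 then -1 else 0)) * (1 / (n:ℝ)) := by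
      intro i
      by_cases h1 : i = e.1.1
      · subst h1; simp [hne]
      · simp [h1]
    rw [Finset.sum_congr rfl fun i _ => hsplit i]
    simp [add_mul, Finset.sum_add_distrib, Finset.sum_ite_eq', hne]
  have hJC : (Matrix.of fun _ _ : Fin n => 1 / (n : ℝ)) * C = 0 := by
    have := congrArg Matrix.transpose hCJ
    rw [Matrix.transpose_mul, Matrix.transpose_transpose, Matrix.transpose_zero] at this
    exact this
  -- main computation
  show Cᵀ * ((1 / d) • (U2 * Qx * U2ᵀ)) * C = _
  rw [hQx']
  have hkey : U2 * ((1 / (2 * (n:ℝ) * γ)) • (U2ᵀ * B2 * U2)) * U2ᵀ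
      = (1 / (2 * (n:ℝ) * γ)) • ((U2 * U2ᵀ) * B2 * (U2 * U2ᵀ)) := by
    rw [Matrix.mul_smul, Matrix.smul_mul]
    congr 1
    simp only [Matrix.mul_assoc]
  rw [hkey, hU2]
  have hexp : Cᵀ * ((1 / d) • ((1 / (2 * (n:ℝ) * γ)) •
      ((1 - Matrix.of fun _ _ : Fin n => 1 / (n : ℝ)) * B2 *
       (1 - Matrix.of fun _ _ : Fin n => 1 / (n : ℝ))))) * C
      = ((1/d) * (1 / (2 * (n:ℝ) * γ))) •
        ((Cᵀ * (1 - Matrix.of fun _ _ : Fin n => 1 / (n : ℝ))) * B2 *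
         ((1 - Matrix.of fun _ _ : Fin n => 1 / (n : ℝ)) * C)) := by
    rw [smul_smul, Matrix.mul_smul, Matrix.smul_mul]
    congr 1
    simp only [Matrix.mul_assoc]
  rw [hexp]
  have h4 : Cᵀ * (1 - Matrix.of fun _ _ : Fin n => 1 / (n : ℝ)) = Cᵀ := by
    rw [Matrix.mul_sub, Matrix.mul_one, hCJ, sub_zero]
  have h5 : (1 - Matrix.of fun _ _ : Fin n => 1 / (n : ℝ)) * C = C := by
    rw [Matrix.sub_mul, Matrix.one_mul, hJC, sub_zero]
  rw [h4, h5]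
  congr 1
  field_simp
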